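/- For all integers n, w, t with 2 ≤ w ≤ n and 1 ≤ t ≤ n−1, the bias ε₀(n,w,t) satisfies ε₀(n,w,t) = ((−2)^{w−2}/C(n−1,w−1)) · p_{w−1}^{n−1}(t), where p_v^m is the Krawtchouk polynomial of degree v and order m evaluated at the integer t. -/

import Mathlib

open Finset

/-- The bias of statistical decoding on a non-error position. -/
noncomputable def eps0 (n w t : ℕ) : ℝ :=
  (∑ j ∈ Finset.range w,
      if Odd j then (t.choose j * (n - t - 1).choose (w - 1 - j) : ℝ) else 0) /
    ((n - 1).choose (w - 1) : ℝ) - 1 / 2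

/-- Generalized binomial coefficient `C(x, j) = x (x-1) ⋯ (x-j+1) / j!`. -/
noncomputable def genChoose (x : ℝ) (j : ℕ) : ℝ :=
  (∏ k ∈ Finset.range j, (x - k)) / (j.factorial : ℝ)

/-- The Krawtchouk polynomial of degree `v` and order `m`, evaluated at `x`. -/
noncomputable def krawtchouk (m v : ℕ) (x : ℝ) : ℝ :=
  ((-1 : ℝ) ^ v / 2 ^ v) *
    ∑ j ∈ Finset.range (v + 1),
      (-1 : ℝ) ^ j * genChoose x j * genChoose ((m : ℝ) - x) (v - j)

lemma prod_range_sub_cast (t j : ℕ) :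
    ∏ k ∈ Finset.range j, ((t : ℝ) - k) = (t.descFactorial j : ℝ) := by
  induction j with
  | zero => simp
  | succ j ih =>
    rw [Finset.prod_range_succ, ih, Nat.descFactorial_succ, Nat.cast_mul]
    by_cases h : j ≤ t
    · rw [Nat.cast_sub h]; ring
    · rw [Nat.descFactorial_eq_zero_iff_lt.mpr (by omega)]; simp

lemma genChoose_natCast (t j : ℕ) : genChoose (t : ℝ) j = (t.choose j : ℝ) := by
  unfold genChoose
  rw [prod_range_sub_cast, Nat.descFactorial_eq_factorial_mul_choose, Nat.cast_mul,
    mul_comm, mul_div_assoc, div_self (by exact_mod_cast j.factorial_ne_zero), mul_one]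

/-- `ε₀(n,w,t) = ((−2)^{w−2}/C(n−1,w−1)) · p_{w−1}^{n−1}(t)`. -/
theorem eps0_eq_krawtchouk (n w t : ℕ) (hw : 2 ≤ w) (hwn : w ≤ n)
    (ht : 1 ≤ t) (htn : t ≤ n - 1) :
    eps0 n w t =
      (((-2 : ℝ) ^ (w - 2)) / ((n - 1).choose (w - 1) : ℝ)) *
        krawtchouk (n - 1) (w - 1) (t : ℝ) := by
  obtain ⟨m, rfl⟩ : ∃ m, w = m + 2 := ⟨w - 2, by omega⟩
  obtain ⟨N, rfl⟩ : ∃ N, n = N + 1 := ⟨n - 1, by omega⟩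
  have htN : t ≤ N := by omega
  have hvN : m + 1 ≤ N := by omega
  have hsub1 : N + 1 - 1 = N := rfl
  have hsub2 : m + 2 - 1 = m + 1 := rfl
  have hsub3 : m + 2 - 2 = m := rfl
  have hsub4 : N + 1 - t - 1 = N - t := by omega
  set c : ℕ → ℝ := fun j => (t.choose j * (N - t).choose (m + 1 - j) : ℝ) with hc
  set C : ℝ := ((N.choose (m + 1) : ℕ) : ℝ) with hC
  have hCpos : 0 < C := by
    have := Nat.choose_pos hvN
    rw [hC]; exact_mod_cast this
  set A : ℝ := ∑ j ∈ Finset.range (m + 2), if Odd j then c j else 0 with hA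
  have hepsA : eps0 (N + 1) (m + 2) t = A / C - 1 / 2 := by
    unfold eps0
    rw [hsub1, hsub2, hsub4]
  -- Vandermonde
  have hS : ∑ j ∈ Finset.range (m + 2), c j = C := by
    have hV := Nat.add_choose_eq t (N - t) (m + 1)
    rw [Finset.Nat.sum_antidiagonal_eq_sum_range_succ_mk] at hV
    have ht' : t + (N - t) = N := by omega
    rw [ht'] at hV
    rw [hC, hV]
    push_cast
    rfl
  -- the krawtchouk sum
  have hkr : krawtchouk N (m + 1) (t : ℝ) =
      ((-1 : ℝ) ^ (m + 1) / 2 ^ (m + 1)) * (C - 2 * A) := by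
    unfold krawtchouk
    congr 1
    have hterm : ∀ j ∈ Finset.range (m + 2),
        (-1 : ℝ) ^ j * genChoose (t : ℝ) j * genChoose ((N : ℝ) - t) (m + 1 - j)
          = c j - 2 * (if Odd j then c j else 0) := by
      intro j _
      rw [show ((N : ℝ) - t) = (((N - t : ℕ)) : ℝ) by rw [Nat.cast_sub htN],
        genChoose_natCast, genChoose_natCast]
      by_cases hj : Odd j
      · rw [if_pos hj, Odd.neg_one_pow hj, hc]; ring
      · rw [if_neg hj, Even.neg_one_pow (Nat.not_odd_iff_even.mp hj), hc]; ring
    rw [Finset.sum_congr rfl hterm, Finset.sum_sub_distrib, ← Finset.mul_sum, hS, ← hA]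
  rw [hepsA, hsub2, hsub3, hsub1, hkr]
  have h1 : ((-1 : ℝ)) ^ m * (-1 : ℝ) ^ m = 1 := by
    rw [← pow_add, Even.neg_one_pow ⟨m, rfl⟩]
  have key2 : ((-2 : ℝ)) ^ m * (-1 : ℝ) ^ m = 2 ^ m := by
    rw [show ((-2 : ℝ)) = (-1) * 2 by norm_num, mul_pow]
    linear_combination (2 : ℝ) ^ m * h1
  have h2m : (2 : ℝ) ^ (m + 1) ≠ 0 := by positivity
  have hCne : C ≠ 0 := ne_of_gt hCpos
  have h2m' : (2 : ℝ) ^ m ≠ 0 := by positivity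
  calc A / C - 1 / 2 = ((-2 : ℝ) ^ m * (-1 : ℝ) ^ m) / 2 ^ m * (-(C - 2 * A) / (2 * C)) := by
        rw [key2, div_self h2m']; field_simp; ring
    _ = _ := by ring
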